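/- arXiv:1002.1929 — 4 statements merged into one kernel-verified Lean document; each statement's English description precedes it below -/
import Mathlib

section
/- For a fixed y ∈ (0, π/2), the function f_y(x) = arccos(sin²(y)·cos(x) + cos²(y)) satisfies f_y(x) ≤ sin(y)·x for all x ∈ [0, π/2]. -/
open Real Set

/-- for fixed `y ∈ (0, π/2)`,
`f_y(x) = arccos(sin²y·cos x + cos²y) ≤ sin y · x` for all `x ∈ [0, π/2]`. -/
theorem stmt1 (y : ℝ) (hy : y ∈ Ioo 0 (π / 2)) :
    ∀ x ∈ Icc 0 (π / 2), arccos (sin y ^ 2 * cos x + cos y ^ 2) ≤ sin y * x := by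
  intro x hx
  obtain ⟨hx0, hx2⟩ := hx
  set s := sin y with hs
  have hs0 : 0 ≤ s := sin_nonneg_of_nonneg_of_le_pi hy.1.le (by linarith [pi_pos, hy.2])
  have hs1 : s ≤ 1 := sin_le_one y
  -- key: sin (s * (x/2)) ≥ s * sin (x/2) by concavity of sin on [0, π]
  have hxpi : x ≤ π := by linarith [pi_pos]
  have key : s * sin (x / 2) ≤ sin (s * (x / 2)) := by
    have h := strictConcaveOn_sin_Icc.concaveOn.2 (x := x / 2) (y := 0)
      ⟨by linarith, by linarith⟩ ⟨le_rfl, pi_pos.le⟩ hs0 (by linarith : (0:ℝ) ≤ 1 - s)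
      (by ring)
    simpa using h
  -- hence cos (s*x) ≤ s^2 * cos x + cos y ^ 2
  have hcos : cos (s * x) ≤ s ^ 2 * cos x + cos y ^ 2 := by
    have hc : cos y ^ 2 = 1 - s ^ 2 := by
      have := sin_sq_add_cos_sq y; linarith
    rw [hc]
    have h1 : cos (s * x) = 1 - 2 * sin (s * (x / 2)) ^ 2 := by
      have := cos_sq (s * (x / 2))
      have h2 := sin_sq_add_cos_sq (s * (x / 2))
      rw [show 2 * (s * (x / 2)) = s * x by ring] at this
      linarith
    have h2 : cos x = 1 - 2 * sin (x / 2) ^ 2 := by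
      have := cos_sq (x / 2)
      have h2 := sin_sq_add_cos_sq (x / 2)
      rw [show 2 * (x / 2) = x by ring] at this
      linarith
    have hsin0 : 0 ≤ sin (x / 2) := sin_nonneg_of_nonneg_of_le_pi (by linarith) (by linarith)
    nlinarith [key, mul_nonneg hs0 hsin0]
  -- conclude via arccos
  have hsx0 : 0 ≤ s * x := mul_nonneg hs0 hx0
  have hsxpi : s * x ≤ π := by nlinarith [pi_pos]
  calc arccos (s ^ 2 * cos x + cos y ^ 2) ≤ arccos (cos (s * x)) := by
        unfold Real.arccos
        have := monotone_arcsin hcos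
        linarith
    _ = s * x := arccos_cos hsx0 hsxpi
end

section
/- For all x in (0, 2·arcsinh(1)), with F as above, one has x + 2·F(x/2) < 2·F(x). -/
open Real Set

/-- The function `F(x) = x/2 + arcsinh(sinh(x/2)/√(1 - sinh²(x/2)))`. -/
noncomputable def Ffun (x : ℝ) : ℝ :=
  x / 2 + Real.arsinh (Real.sinh (x / 2) / Real.sqrt (1 - Real.sinh (x / 2) ^ 2))

noncomputable def Gfun (t : ℝ) : ℝ :=
  Real.arsinh (Real.sinh t / Real.sqrt (1 - Real.sinh t ^ 2)) - t

lemma Gfun_hasDerivAt {t : ℝ} (ht : Real.sinh t ^ 2 < 1) :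
    HasDerivAt Gfun (Real.cosh t / (1 - Real.sinh t ^ 2) - 1) t := by
  set s := Real.sinh t with hs
  set c := Real.cosh t with hc
  have hpos : 0 < 1 - s ^ 2 := by linarith
  have hd : (0 : ℝ) < Real.sqrt (1 - s ^ 2) := Real.sqrt_pos.2 hpos
  have hd2 : Real.sqrt (1 - s ^ 2) ^ 2 = 1 - s ^ 2 := Real.sq_sqrt hpos.le
  have h1 : HasDerivAt (fun t => 1 - Real.sinh t ^ 2)
      (-(2 * Real.sinh t ^ 1 * Real.cosh t)) t := by
    have := ((Real.hasDerivAt_sinh t).pow 2).const_sub 1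
    simpa using this
  have h2 : HasDerivAt (fun t => Real.sqrt (1 - Real.sinh t ^ 2))
      ((-(2 * Real.sinh t ^ 1 * Real.cosh t)) / (2 * Real.sqrt (1 - Real.sinh t ^ 2))) t :=
    h1.sqrt (by simpa using hpos.ne')
  have h3 : HasDerivAt (fun t => Real.sinh t / Real.sqrt (1 - Real.sinh t ^ 2))
      ((Real.cosh t * Real.sqrt (1 - Real.sinh t ^ 2) -
        Real.sinh t * ((-(2 * Real.sinh t ^ 1 * Real.cosh t)) /
          (2 * Real.sqrt (1 - Real.sinh t ^ 2)))) / Real.sqrt (1 - Real.sinh t ^ 2) ^ 2) t :=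
    (Real.hasDerivAt_sinh t).div h2 hd.ne'
  have h4 := h3.arsinh
  have hsim : (Real.sqrt (1 + (s / Real.sqrt (1 - s ^ 2)) ^ 2))⁻¹ •
      ((c * Real.sqrt (1 - s ^ 2) -
        s * ((-(2 * s ^ 1 * c)) / (2 * Real.sqrt (1 - s ^ 2)))) /
        Real.sqrt (1 - s ^ 2) ^ 2) = c / (1 - s ^ 2) := by
    have hsq : 1 + (s / Real.sqrt (1 - s ^ 2)) ^ 2 = (1 / Real.sqrt (1 - s ^ 2)) ^ 2 := by
      field_simp; rw [hd2]; ring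
    rw [hsq, Real.sqrt_sq (by positivity)]
    rw [smul_eq_mul]
    rw [one_div, inv_inv, eq_div_iff hpos.ne']
    field_simp
    linear_combination (-(s ^ 2 * c)) * hd2
  have h5 : HasDerivAt (fun t => Real.arsinh (Real.sinh t / Real.sqrt (1 - Real.sinh t ^ 2)))
      (Real.cosh t / (1 - Real.sinh t ^ 2)) t := by
    rw [← hsim]; exact h4
  exact h5.sub (hasDerivAt_id t)

lemma sinh_lt_one {t : ℝ} (ht : t < Real.arsinh 1) : Real.sinh t < 1 := by
  have := Real.sinh_lt_sinh.2 ht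
  rwa [Real.sinh_arsinh] at this

lemma sinh_sq_lt_one {t : ℝ} (h0 : 0 ≤ t) (ht : t < Real.arsinh 1) : Real.sinh t ^ 2 < 1 := by
  have h1 : Real.sinh t < 1 := sinh_lt_one ht
  have h2 : 0 ≤ Real.sinh t := by simpa using Real.sinh_le_sinh.2 h0
  nlinarith

lemma Gfun_strictMonoOn : StrictMonoOn Gfun (Ico 0 (Real.arsinh 1)) := by
  apply strictMonoOn_of_deriv_pos (convex_Ico _ _)
  · intro t ht
    exact ((Gfun_hasDerivAt (sinh_sq_lt_one ht.1 ht.2)).continuousAt).continuousWithinAt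
  · intro t ht
    rw [interior_Ico] at ht
    have hsq := sinh_sq_lt_one ht.1.le ht.2
    rw [(Gfun_hasDerivAt hsq).deriv]
    have hc : 1 ≤ Real.cosh t := Real.one_le_cosh t
    have hspos : 0 < Real.sinh t := by simpa using Real.sinh_lt_sinh.2 ht.1
    rw [sub_pos, lt_div_iff₀ (by nlinarith)]
    nlinarith

/-- for all `x ∈ (0, 2·arcsinh 1)`, `x + 2·F(x/2) < 2·F(x)`. -/
theorem stmt5 : ∀ x ∈ Ioo 0 (2 * Real.arsinh 1), x + 2 * Ffun (x / 2) < 2 * Ffun x := by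
  intro x hx
  obtain ⟨hx0, hx2⟩ := hx
  have ha : 0 < Real.arsinh 1 := Real.arsinh_pos_iff.2 one_pos
  have hF1 : Ffun x = x + Gfun (x / 2) := by simp [Ffun, Gfun]; ring
  have hF2 : Ffun (x / 2) = x / 2 + Gfun (x / 2 / 2) := by simp [Ffun, Gfun]; ring
  have h4 : x / 2 / 2 ∈ Ico (0 : ℝ) (Real.arsinh 1) := ⟨by linarith, by linarith⟩
  have h2 : x / 2 ∈ Ico (0 : ℝ) (Real.arsinh 1) := ⟨by linarith, by linarith⟩
  have := Gfun_strictMonoOn h4 h2 (by linarith)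
  rw [hF1, hF2]
  linarith
end

section
/- Suppose T is a hyperbolic triangle with one side of length C > 0 whose opposite angle equals γ ∈ (0, π). Then the sum of the lengths of the other two sides is at most 2·arcsinh( sinh(C/2) / sin(γ/2) ); consequently the perimeter of T is at most C + 2·arcsinh( sinh(C/2) / sin(γ/2) ). -/
open Real Set

/-- a hyperbolic triangle with side lengths `a`, `b`, `C`, where the
angle `γ` opposite the side of length `C` is given by the hyperbolic law of cosines,
has `a + b ≤ 2·arcsinh(sinh(C/2)/sin(γ/2))`, and hence perimeter at most
`C + 2·arcsinh(sinh(C/2)/sin(γ/2))`. -/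
theorem stmt6 (a b C γ : ℝ) (ha : 0 < a) (hb : 0 < b) (hC : 0 < C)
    (hγ : γ ∈ Ioo 0 π)
    (hlaw : Real.cosh C = Real.cosh a * Real.cosh b - Real.sinh a * Real.sinh b * Real.cos γ) :
    a + b ≤ 2 * Real.arsinh (Real.sinh (C / 2) / Real.sin (γ / 2)) ∧
      a + b + C ≤ C + 2 * Real.arsinh (Real.sinh (C / 2) / Real.sin (γ / 2)) := by
  obtain ⟨hγ0, hγπ⟩ := hγ
  set s := Real.sin (γ / 2) with hs_def
  have hs0 : 0 < s := Real.sin_pos_of_pos_of_lt_pi (by linarith) (by linarith [Real.pi_pos])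
  have hs1 : s ≤ 1 := Real.sin_le_one _
  -- cos γ = 1 - 2 s^2
  have hcos : Real.cos γ = 1 - 2 * s ^ 2 := by
    have : γ = 2 * (γ / 2) := by ring
    rw [this, Real.cos_two_mul', hs_def]
    have h := Real.sin_sq_add_cos_sq (γ / 2)
    linarith
  -- rewrite the law
  have key : Real.cosh C = (1 - s ^ 2) * Real.cosh (a - b) + s ^ 2 * Real.cosh (a + b) := by
    rw [hlaw, hcos, Real.cosh_sub, Real.cosh_add]; ring
  have hcoshab1 : 1 ≤ Real.cosh (a - b) := Real.one_le_cosh _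
  have hmain : s ^ 2 * (Real.cosh (a + b) - 1) ≤ Real.cosh C - 1 := by
    have h2 : s ^ 2 ≤ 1 := by nlinarith
    nlinarith [mul_nonneg (by linarith : (0:ℝ) ≤ 1 - s ^ 2) (by linarith : (0:ℝ) ≤ Real.cosh (a - b) - 1)]
  -- cosh x - 1 = 2 sinh(x/2)^2
  have hhalf : ∀ x : ℝ, Real.cosh x - 1 = 2 * Real.sinh (x / 2) ^ 2 := by
    intro x
    have hx : Real.cosh x = Real.cosh (x / 2 + x / 2) := by norm_num
    rw [hx, Real.cosh_add]
    have := Real.cosh_sq (x / 2)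
    nlinarith
  have hsinhab : 0 < Real.sinh ((a + b) / 2) := Real.sinh_pos_iff.2 (by linarith)
  have hsinhC : 0 < Real.sinh (C / 2) := Real.sinh_pos_iff.2 (by linarith)
  have hsq : Real.sinh ((a + b) / 2) ^ 2 ≤ (Real.sinh (C / 2) / s) ^ 2 := by
    rw [div_pow]
    rw [le_div_iff₀ (by positivity)]
    have h1 := hhalf (a + b)
    have h2 := hhalf C
    nlinarith
  have hle : Real.sinh ((a + b) / 2) ≤ Real.sinh (C / 2) / s := by
    have hpos : 0 < Real.sinh (C / 2) / s := by positivity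
    nlinarith
  have := Real.arsinh_le_arsinh.2 hle
  rw [Real.arsinh_sinh] at this
  constructor <;> linarith
end

section
/- Fix G > 0 and φ ∈ (0, π/2], and define f(s) = arcsinh( sinh(s) / sin(φ) ). Then f is odd, strictly increasing, and concave on [0, ∞); consequently sup { f(s) − f(s − G) : s ≥ G/2 } = f(G/2) − f(−G/2) = 2·arcsinh( sinh(G/2) / sin(φ) ). -/
open Real Set

/-- for fixed `G > 0` and `φ ∈ (0, π/2]`, the function
`f(s) = arcsinh(sinh s / sin φ)` is odd, strictly increasing, and concave on `[0, ∞)`;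
consequently `sup { f(s) - f(s - G) : s ≥ G/2 }` is attained and equals
`f(G/2) - f(-G/2) = 2·arcsinh(sinh(G/2)/sin φ)`. -/
theorem stmt10 (G φ : ℝ) (hG : 0 < G) (hφ : φ ∈ Ioc 0 (π / 2)) :
    let f : ℝ → ℝ := fun s => Real.arsinh (Real.sinh s / Real.sin φ)
    (∀ s, f (-s) = -f s) ∧ StrictMono f ∧ ConcaveOn ℝ (Ici 0) f ∧
      IsGreatest {y | ∃ s, G / 2 ≤ s ∧ y = f s - f (s - G)}
        (2 * Real.arsinh (Real.sinh (G / 2) / Real.sin φ)) := by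
  intro f
  obtain ⟨hφ0, hφ2⟩ := hφ
  have ha : 0 < Real.sin φ := Real.sin_pos_of_pos_of_lt_pi hφ0
    (lt_of_le_of_lt hφ2 (by linarith [Real.pi_pos]))
  have ha1 : Real.sin φ ≤ 1 := Real.sin_le_one φ
  set a := Real.sin φ with haa
  -- oddness
  have hodd : ∀ s, f (-s) = -f s := by
    intro s
    simp [f, Real.sinh_neg, neg_div, Real.arsinh_neg]
  have hf0 : f 0 = 0 := by simp [f]
  -- strict monotonicity
  have hmono : StrictMono f := by
    intro x y hxy
    have : Real.sinh x / a < Real.sinh y / a := by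
      gcongr
      exact Real.sinh_lt_sinh.2 hxy
    exact Real.arsinh_lt_arsinh.2 this
  -- derivative
  set D : ℝ → ℝ := fun s => (Real.sqrt (1 + (Real.sinh s / a) ^ 2))⁻¹ * (Real.cosh s / a)
    with hDdef
  have hD : ∀ s, HasDerivAt f (D s) s := by
    intro s
    have := (Real.hasDerivAt_arsinh (Real.sinh s / a)).comp s
      ((Real.hasDerivAt_sinh s).div_const a)
    exact this
  have hDeq : ∀ s, D s = Real.cosh s / Real.sqrt (a ^ 2 + Real.sinh s ^ 2) := by
    intro s
    have h1 : 1 + (Real.sinh s / a) ^ 2 = (a ^ 2 + Real.sinh s ^ 2) / a ^ 2 := by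
      field_simp
    have hpos : (0:ℝ) < a ^ 2 + Real.sinh s ^ 2 := by positivity
    have hsq : Real.sqrt (a ^ 2) = a := Real.sqrt_sq ha.le
    rw [hDdef]
    simp only
    rw [h1, Real.sqrt_div hpos.le, hsq]
    have hs0 : Real.sqrt (a ^ 2 + Real.sinh s ^ 2) ≠ 0 := by positivity
    field_simp
  have hderiv : deriv f = D := funext fun s => (hD s).deriv
  -- concavity
  have hconc : ConcaveOn ℝ (Ici 0) f := by
    apply AntitoneOn.concaveOn_of_deriv (convex_Ici 0)
    · exact (Real.continuous_arsinh.comp (Real.continuous_sinh.div_const a)).continuousOn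
    · exact fun x _ => (hD x).differentiableAt.differentiableWithinAt
    · rw [hderiv, interior_Ici]
      intro x hx y hy hxy
      rw [hDeq, hDeq]
      set u := Real.sinh x with hu
      set v := Real.sinh y with hv
      have huv : u ≤ v := Real.sinh_le_sinh.2 hxy
      have hu0 : 0 ≤ u := Real.sinh_nonneg_iff.2 (le_of_lt hx)
      have hcx : Real.cosh x ^ 2 = u ^ 2 + 1 := Real.cosh_sq x
      have hcy : Real.cosh y ^ 2 = v ^ 2 + 1 := Real.cosh_sq y
      have key : Real.cosh y ^ 2 * (a ^ 2 + u ^ 2) ≤ Real.cosh x ^ 2 * (a ^ 2 + v ^ 2) := by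
        have h1 : u ^ 2 ≤ v ^ 2 := by nlinarith
        have h2 : a ^ 2 ≤ 1 := by nlinarith
        rw [hcx, hcy]
        nlinarith [mul_nonneg (sub_nonneg.2 h2) (sub_nonneg.2 h1)]
      have hAx : (0:ℝ) < a ^ 2 + u ^ 2 := by positivity
      have hAy : (0:ℝ) < a ^ 2 + v ^ 2 := by positivity
      rw [div_le_div_iff₀ (Real.sqrt_pos.2 hAy) (Real.sqrt_pos.2 hAx)]
      calc Real.cosh y * Real.sqrt (a ^ 2 + u ^ 2)
          = Real.sqrt (Real.cosh y ^ 2 * (a ^ 2 + u ^ 2)) := by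
            rw [Real.sqrt_mul (sq_nonneg _), Real.sqrt_sq (Real.cosh_pos y).le]
        _ ≤ Real.sqrt (Real.cosh x ^ 2 * (a ^ 2 + v ^ 2)) := Real.sqrt_le_sqrt key
        _ = Real.cosh x * Real.sqrt (a ^ 2 + v ^ 2) := by
            rw [Real.sqrt_mul (sq_nonneg _), Real.sqrt_sq (Real.cosh_pos x).le]
  refine ⟨hodd, hmono, hconc, ?_, ?_⟩
  · -- membership
    refine ⟨G / 2, le_refl _, ?_⟩
    have h1 : G / 2 - G = -(G / 2) := by ring
    show 2 * f (G / 2) = f (G / 2) - f (G / 2 - G)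
    rw [h1, hodd]
    ring
  · -- upper bound
    rintro y ⟨s, hs, rfl⟩
    show f s - f (s - G) ≤ 2 * f (G / 2)
    have hs0 : (0:ℝ) ≤ s := by linarith
    have hhalf : f (G / 2) ≥ (1/2 : ℝ) * f 0 + (1/2 : ℝ) * f G := by
      have h := hconc.2 (by simp : (0:ℝ) ∈ Ici (0:ℝ)) (by simp [hG.le] : G ∈ Ici (0:ℝ))
        (by norm_num : (0:ℝ) ≤ 1/2) (by norm_num : (0:ℝ) ≤ 1/2) (by norm_num)
      have h3 : (1/2:ℝ) • (0:ℝ) + (1/2:ℝ) • G = G / 2 := by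
        simp only [smul_eq_mul]; ring
      rw [h3] at h
      simpa [smul_eq_mul] using h
    rcases le_or_gt s G with hsG | hsG
    · -- G/2 ≤ s ≤ G
      have hGs : (0:ℝ) ≤ G - s := by linarith
      have h1 : f (s - G) = -f (G - s) := by
        have : s - G = -(G - s) := by ring
        rw [this, hodd]
      have h2 := hconc.2 (mem_Ici.2 hs0) (mem_Ici.2 hGs)
        (by norm_num : (0:ℝ) ≤ 1/2) (by norm_num : (0:ℝ) ≤ 1/2) (by norm_num)
      have h3 : (1/2:ℝ) • s + (1/2:ℝ) • (G - s) = G / 2 := by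
        simp only [smul_eq_mul]; ring
      rw [h3] at h2
      simp only [smul_eq_mul] at h2
      rw [h1]
      linarith
    · -- s > G
      have hspos : (0:ℝ) < s := by linarith
      set L : ℝ := (s - G) / s with hL
      set M : ℝ := G / s with hM
      have hL0 : 0 ≤ L := div_nonneg (by linarith) hspos.le
      have hM0 : 0 ≤ M := div_nonneg hG.le hspos.le
      have hLM : L + M = 1 := by rw [hL, hM]; field_simp; ring
      have hc1 : L • (0:ℝ) + M • s = G := by
        simp [smul_eq_mul, hM, div_mul_cancel₀ _ hspos.ne']
      have hc2 : M • (0:ℝ) + L • s = s - G := by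
        simp [smul_eq_mul, hL, div_mul_cancel₀ _ hspos.ne']
      have h1 := hconc.2 (by simp : (0:ℝ) ∈ Ici (0:ℝ)) (mem_Ici.2 hs0) hL0 hM0 hLM
      have h2 := hconc.2 (by simp : (0:ℝ) ∈ Ici (0:ℝ)) (mem_Ici.2 hs0) hM0 hL0
        (by linarith : M + L = 1)
      rw [hc1] at h1
      rw [hc2] at h2
      simp only [smul_eq_mul, hf0, mul_zero, zero_add] at h1 h2
      have hsum : M * f s + L * f s = f s := by
        rw [← add_mul, add_comm M L, hLM, one_mul]
      linarith
end
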